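/- Let f be a real-valued harmonic function on 𝔻 with values in (-1,1). Then there exists an absolute constant M > 0 (independent of f) such that for all z ∈ 𝔻 and all δ with 0 < δ < 1 - |z|, 𝓜_f(z) ≤ 2M(M_{z,δ} - |f(z)|)/δ, where M_{z,δ} = sup{|f(w)| : |w - z| < δ} and 𝓜_f = |f_z| + |f_{z̄}|. -/

import Mathlib

open Metric

open Set Complex ComplexConjugate in
lemma halfplane_deriv_bound (g : ℂ → ℂ) (z : ℂ) (δ : ℝ) (hδ : 0 < δ)
    (hg : DifferentiableOn ℂ g (ball z δ))
    (hpos : ∀ w ∈ ball z δ, 0 < (g w).re) :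
    ‖deriv g z‖ ≤ 2 * (g z).re / δ := by
  set c := g z with hc
  have hzmem : z ∈ ball z δ := mem_ball_self hδ
  have hcre : 0 < c.re := hpos z hzmem
  set φ : ℂ → ℂ := fun w => (w - c) / (w + conj c) with hφ
  have hden : ∀ w : ℂ, 0 < w.re → w + conj c ≠ 0 := by
    intro w hw h0
    have h1 : (w + conj c).re = w.re + c.re := by simp
    rw [h0] at h1
    simp only [Complex.zero_re] at h1
    nlinarith
  have hmaps : ∀ w : ℂ, 0 < w.re → ‖φ w‖ < 1 := by
    intro w hw
    have hne := hden w hw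
    have hnormpos : 0 < ‖w + conj c‖ := norm_pos_iff.mpr hne
    rw [hφ]
    simp only [norm_div]
    rw [div_lt_one hnormpos]
    have h1 : Complex.normSq (w - c) < Complex.normSq (w + conj c) := by
      simp only [Complex.normSq_apply, Complex.sub_re, Complex.sub_im, Complex.add_re,
        Complex.add_im, Complex.conj_re, Complex.conj_im]
      nlinarith
    have e1 : ‖w - c‖ = Real.sqrt (Complex.normSq (w - c)) := by
      rw [Complex.norm_def]
    have e2 : ‖w + conj c‖ = Real.sqrt (Complex.normSq (w + conj c)) := by
      rw [Complex.norm_def]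
    rw [e1, e2]
    exact Real.sqrt_lt_sqrt (Complex.normSq_nonneg _) h1
  have hsum_ne : c + conj c ≠ 0 := hden c hcre
  -- derivative of φ at c
  have hφc : HasDerivAt φ ((c + conj c)⁻¹) c := by
    have h1 : HasDerivAt (fun w : ℂ => w - c) 1 c := (hasDerivAt_id c).sub_const c
    have h2 : HasDerivAt (fun w : ℂ => w + conj c) 1 c := (hasDerivAt_id c).add_const _
    have : HasDerivAt (fun w : ℂ => (w - c) / (w + conj c)) _ c := h1.div h2 hsum_ne
    convert this using 1
    field_simp
    ring
  -- g differentiable at z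
  have hgz : HasDerivAt g (deriv g z) z :=
    (hg.differentiableAt (isOpen_ball.mem_nhds hzmem)).hasDerivAt
  set F : ℂ → ℂ := φ ∘ g with hF
  have hFz : F z = 0 := by
    simp [hF, hφ, hc]
  have hFdiff : DifferentiableOn ℂ F (ball z δ) := by
    intro w hw
    have hφw : DifferentiableAt ℂ φ (g w) := by
      apply DifferentiableAt.div
      · fun_prop
      · fun_prop
      · exact hden _ (hpos w hw)
    exact DifferentiableAt.comp_differentiableWithinAt w hφw (hg w hw)
  have hFmaps : Set.MapsTo F (ball z δ) (ball (F z) 1) := by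
    intro w hw
    rw [hFz, mem_ball, dist_zero_right]
    exact hmaps (g w) (hpos w hw)
  have hschwarz : ‖deriv F z‖ ≤ 1 / δ :=
    Complex.norm_deriv_le_div_of_mapsTo_ball hFdiff (hFmaps.mono_right ball_subset_closedBall) hδ
  have hFderiv : HasDerivAt F ((c + conj c)⁻¹ * deriv g z) z := hφc.comp z hgz
  rw [hFderiv.deriv] at hschwarz
  have hnorm : ‖(c + conj c)⁻¹ * deriv g z‖ = ‖deriv g z‖ / (2 * c.re) := by
    rw [norm_mul, norm_inv]
    have : c + conj c = ((2 * c.re : ℝ) : ℂ) := by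
      rw [Complex.add_conj]
    rw [this, Complex.norm_real, Real.norm_eq_abs, abs_of_pos (by linarith)]
    ring
  rw [hnorm] at hschwarz
  rw [div_le_div_iff₀ (by linarith) hδ] at hschwarz
  rw [le_div_iff₀ hδ]
  linarith

theorem stmt19 :
    ∃ M > (0:ℝ), ∀ h : ℂ → ℂ,
      DifferentiableOn ℂ h (ball (0:ℂ) 1) →
      (∀ z ∈ ball (0:ℂ) 1, |(h z).re| < 1) →
      ∀ z ∈ ball (0:ℂ) 1, ∀ δ : ℝ, 0 < δ → δ < 1 - ‖z‖ →
        ‖deriv h z‖ ≤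
          2 * M * (sSup ((fun w => |(h w).re|) '' ball z δ) - |(h z).re|) / δ := by
  refine ⟨1, one_pos, ?_⟩
  intro h hdiff hbound z hz δ hδ hδ'
  set M' := sSup ((fun w => |(h w).re|) '' ball z δ) with hM'
  have hsub : ball z δ ⊆ ball (0:ℂ) 1 := by
    intro w hw
    rw [mem_ball, dist_zero_right]
    have h1 : ‖w - z‖ < δ := by rwa [mem_ball, dist_eq_norm] at hw
    calc ‖w‖ = ‖(w - z) + z‖ := by ring_nf
      _ ≤ ‖w - z‖ + ‖z‖ := norm_add_le _ _
      _ < δ + ‖z‖ := by linarith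
      _ < 1 := by linarith
  have hbdd : BddAbove ((fun w => |(h w).re|) '' ball z δ) := by
    refine ⟨1, ?_⟩
    rintro y ⟨w, hw, rfl⟩
    exact (hbound w (hsub hw)).le
  have hle : ∀ w ∈ ball z δ, |(h w).re| ≤ M' := fun w hw =>
    le_csSup hbdd (Set.mem_image_of_mem _ hw)
  have hzball : z ∈ ball z δ := mem_ball_self hδ
  have hderivh : DifferentiableAt ℂ h z :=
    hdiff.differentiableAt (isOpen_ball.mem_nhds (hsub hzball))
  -- epsilon argument
  have key : ∀ ε : ℝ, 0 < ε → ‖deriv h z‖ ≤ 2 * (M' - |(h z).re| + ε) / δ := by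
    intro ε hε
    rcases le_or_gt 0 (h z).re with hre | hre
    · -- use g = (M' + ε) - h
      set g : ℂ → ℂ := fun w => ((M' + ε : ℝ) : ℂ) - h w with hg
      have hgpos : ∀ w ∈ ball z δ, 0 < (g w).re := by
        intro w hw
        have h1 := hle w hw
        have h2 : (h w).re ≤ |(h w).re| := le_abs_self _
        simp only [hg, Complex.sub_re, Complex.ofReal_re]
        linarith
      have hgdiff : DifferentiableOn ℂ g (ball z δ) :=
        (differentiableOn_const _).sub (hdiff.mono hsub)
      have hb := halfplane_deriv_bound g z δ hδ hgdiff hgpos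
      have hd : HasDerivAt g (-(deriv h z)) z :=
        hderivh.hasDerivAt.const_sub _
      rw [hd.deriv, norm_neg] at hb
      have hre' : (g z).re = M' - |(h z).re| + ε := by
        simp only [hg, Complex.sub_re, Complex.ofReal_re, abs_of_nonneg hre]
        ring
      rwa [hre'] at hb
    · -- use g = (M' + ε) + h
      set g : ℂ → ℂ := fun w => ((M' + ε : ℝ) : ℂ) + h w with hg
      have hgpos : ∀ w ∈ ball z δ, 0 < (g w).re := by
        intro w hw
        have h1 := hle w hw
        have h2 : -(h w).re ≤ |(h w).re| := neg_le_abs _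
        simp only [hg, Complex.add_re, Complex.ofReal_re]
        linarith
      have hgdiff : DifferentiableOn ℂ g (ball z δ) :=
        (differentiableOn_const _).add (hdiff.mono hsub)
      have hb := halfplane_deriv_bound g z δ hδ hgdiff hgpos
      have hd : HasDerivAt g (deriv h z) z :=
        hderivh.hasDerivAt.const_add _
      rw [hd.deriv] at hb
      have hre' : (g z).re = M' - |(h z).re| + ε := by
        simp only [hg, Complex.add_re, Complex.ofReal_re, abs_of_neg hre]
        ring
      rwa [hre'] at hb
  have final : ‖deriv h z‖ ≤ 2 * (M' - |(h z).re|) / δ := by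
    refine le_of_forall_pos_le_add ?_
    intro ε' hε'
    have := key (ε' * δ / 2) (by positivity)
    calc ‖deriv h z‖ ≤ 2 * (M' - |(h z).re| + ε' * δ / 2) / δ := this
      _ = 2 * (M' - |(h z).re|) / δ + ε' := by field_simp
  calc ‖deriv h z‖ ≤ 2 * (M' - |(h z).re|) / δ := final
    _ = 2 * 1 * (M' - |(h z).re|) / δ := by ring
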